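/- Let |0⟩, |φ⟩, |φ̃⟩ be unit vectors with |φ⟩, |φ̃⟩ orthogonal to |0⟩, let 0 < λ ≤ 1, and define |ψ_φ⟩ = √(1−λ)|0⟩ + √λ |φ⟩ and similarly |ψ_{φ̃}⟩. Then the trace distance between the corresponding pure states satisfies ‖ |ψ_φ⟩⟨ψ_φ| − |ψ_{φ̃}⟩⟨ψ_{φ̃}| ‖₁ ≥ √(λ/2) · ‖ |φ⟩⟨φ| − |φ̃⟩⟨φ̃| ‖₁. -/

import Mathlib

open Matrix ComplexOrder

/-- The trace norm `‖A‖₁ = Tr √(AᴴA)` of a complex matrix. -/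
noncomputable def traceNorm {ι : Type*} [Fintype ι] [DecidableEq ι] (A : Matrix ι ι ℂ) : ℝ :=
  (((Matrix.posSemidef_conjTranspose_mul_self A).1.eigenvectorUnitary : Matrix ι ι ℂ) *
      Matrix.diagonal (((↑) : ℝ → ℂ) ∘ Real.sqrt ∘ (Matrix.posSemidef_conjTranspose_mul_self A).1.eigenvalues) *
      (star (Matrix.posSemidef_conjTranspose_mul_self A).1.eigenvectorUnitary : Matrix ι ι ℂ)).trace.re

open scoped MatrixOrder in
lemma traceNorm_eq_of_sq {ι : Type*} [Fintype ι] [DecidableEq ι] (A B : Matrix ι ι ℂ)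
    (hB : B.PosSemidef) (h : B ^ 2 = Aᴴ * A) : traceNorm A = B.trace.re := by
  have hA := posSemidef_conjTranspose_mul_self A
  have key : CFC.sqrt (Aᴴ * A) = B := CFC.sqrt_unique (by rw [← h, sq]) hB.nonneg
  rw [CFC.sqrt_eq_cfc, cfc_nnreal_eq_real _ (Aᴴ * A) hA.nonneg, hA.1.cfc_eq] at key
  rw [traceNorm, ← key]
  have hf : (fun x : ℝ => √(max x 0)) = Real.sqrt := funext fun x => by
    rcases le_total x 0 with hx | hx
    · simp [hx, Real.sqrt_eq_zero'.mpr hx]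
    · simp [hx]
  simp only [IsHermitian.cfc, Unitary.conjStarAlgAut_apply, Real.coe_sqrt, Real.coe_toNNReal', hf]
  rfl

lemma vmv_mul {d : ℕ} (a b c e : Fin d → ℂ) :
    vecMulVec a (star b) * vecMulVec c (star e)
      = (star b ⬝ᵥ c) • vecMulVec a (star e) := by
  ext i j
  simp only [mul_apply, vecMulVec_apply, Matrix.smul_apply, dotProduct, smul_eq_mul,
    Finset.sum_mul, Pi.star_apply]
  refine Finset.sum_congr rfl fun k _ => by ring

lemma vmv_psd {d : ℕ} (a : Fin d → ℂ) : (vecMulVec a (star a)).PosSemidef := by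
  have h : vecMulVec a (star a) = (replicateRow (Fin 1) (star a))ᴴ * (replicateRow (Fin 1) (star a)) := by
    rw [conjTranspose_replicateRow, star_star, vecMulVec_eq (Fin 1)]
    rfl
  rw [h]
  exact posSemidef_conjTranspose_mul_self _

lemma psd_smul {d : ℕ} {M : Matrix (Fin d) (Fin d) ℂ} (hM : M.PosSemidef) {r : ℝ}
    (hr : 0 ≤ r) : ((r : ℂ) • M).PosSemidef := by
  exact hM.smul (Complex.zero_le_real.2 hr)

lemma vmv_trace {d : ℕ} (a : Fin d → ℂ) :
    (vecMulVec a (star a)).trace = star a ⬝ᵥ a := by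
  simp only [trace, Matrix.diag_apply, vecMulVec_apply, dotProduct, Pi.star_apply]
  exact Finset.sum_congr rfl fun k _ => mul_comm _ _

lemma star_dot_comm {d : ℕ} (a b : Fin d → ℂ) : star a ⬝ᵥ b = star (star b ⬝ᵥ a) := by
  simp only [dotProduct, star_sum, Pi.star_apply, star_mul', star_star]
  exact Finset.sum_congr rfl fun k _ => mul_comm _ _

/-- The trace norm of the difference of two pure states. -/
lemma traceNorm_pure_diff {d : ℕ} (u v : Fin d → ℂ)
    (hu : star u ⬝ᵥ u = 1) (hv : star v ⬝ᵥ v = 1) :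
    traceNorm (vecMulVec u (star u) - vecMulVec v (star v))
      = 2 * Real.sqrt (1 - Complex.normSq (star u ⬝ᵥ v)) := by
  set c : ℂ := star u ⬝ᵥ v with hc
  set s : ℝ := 1 - Complex.normSq c with hs
  set A : Matrix (Fin d) (Fin d) ℂ := vecMulVec u (star u) - vecMulVec v (star v) with hA
  set U : Matrix (Fin d) (Fin d) ℂ := vecMulVec u (star u) with hU
  set V : Matrix (Fin d) (Fin d) ℂ := vecMulVec v (star v) with hV
  have hvu : star v ⬝ᵥ u = star c := by rw [star_dot_comm, ← hc]
  set w₀ : Fin d → ℂ := v - c • u with hw₀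
  set W : Matrix (Fin d) (Fin d) ℂ := vecMulVec w₀ (star w₀) with hW
  have huw : star u ⬝ᵥ w₀ = 0 := by
    simp [hw₀, dotProduct_sub, dotProduct_smul, ← hc, hu]
  have hwu : star w₀ ⬝ᵥ u = 0 := by
    rw [star_dot_comm, huw, star_zero]
  have hww : star w₀ ⬝ᵥ w₀ = (s : ℂ) := by
    simp only [hw₀, star_sub, star_smul, sub_dotProduct, dotProduct_sub, smul_dotProduct,
      dotProduct_smul, smul_eq_mul, hv, hvu, ← hc, hu, mul_one]
    have hnsq : ((Complex.normSq c : ℝ) : ℂ) = star c * c := by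
      rw [Complex.normSq_eq_conj_mul_self]; rfl
    rw [hs]
    push_cast
    rw [hnsq]
    ring
  -- the key matrix identity
  have hAh : Aᴴ = A := by
    rw [hA]
    ext i j
    simp only [conjTranspose_apply, Matrix.sub_apply, vecMulVec_apply, Pi.star_apply, star_sub,
      star_mul', star_star, hU, hV]
    ring
  have hAA : Aᴴ * A = (s : ℂ) • U + W := by
    rw [hAh, hA]
    have expand : (U - V) * (U - V) = U + V - c • vecMulVec u (star v)
        - star c • vecMulVec v (star u) := by
      rw [sub_mul, mul_sub, mul_sub, hU, hV, vmv_mul, vmv_mul, vmv_mul, vmv_mul,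
        hu, hv, ← hc, hvu, one_smul, one_smul]
      abel
    rw [expand]
    have hsc : (s : ℂ) = 1 - c * star c := by
      have hnsq : ((Complex.normSq c : ℝ) : ℂ) = star c * c := by
        rw [Complex.normSq_eq_conj_mul_self]; rfl
      rw [hs]
      push_cast
      rw [hnsq]
      ring
    ext i j
    simp only [Matrix.sub_apply, Matrix.add_apply, Matrix.smul_apply, vecMulVec_apply, Pi.star_apply, hw₀, hW, hU, hV,
      Pi.sub_apply, Pi.smul_apply, smul_eq_mul, star_sub, star_mul', star_star]
    rw [hsc]
    ring
  have hs0 : 0 ≤ s := by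
    have h2 : ((s : ℝ) : ℂ) = ∑ i, ((Complex.normSq (w₀ i) : ℝ) : ℂ) := by
      rw [← hww]
      simp only [dotProduct, Pi.star_apply]
      refine Finset.sum_congr rfl fun i _ => ?_
      rw [Complex.normSq_eq_conj_mul_self]
      rfl
    have h3 : s = ∑ i, Complex.normSq (w₀ i) := by exact_mod_cast h2
    rw [h3]
    exact Finset.sum_nonneg fun i _ => Complex.normSq_nonneg _
  rcases eq_or_lt_of_le hs0 with hse | hsp
  · -- s = 0 : v is parallel to u, A = 0
    have hw0 : w₀ = 0 := by
      rw [← dotProduct_star_self_eq_zero (v := w₀), hww, ← hse]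
      norm_num
    have hA0 : A = 0 := by
      have hveq : v = c • u := by
        have := sub_eq_zero.mp (hw₀ ▸ hw0 : v - c • u = 0)
        exact this
      have hc1 : c * star c = 1 := by
        have h0 : (s:ℂ) = 1 - c * star c := by
          have hnsq : ((Complex.normSq c : ℝ) : ℂ) = star c * c := by
            rw [Complex.normSq_eq_conj_mul_self]; rfl
          rw [hs]; push_cast; rw [hnsq]; ring
        rw [← hse] at h0
        push_cast at h0
        linear_combination h0
      rw [hA, hU, hV, hveq]
      ext i j
      simp only [Matrix.sub_apply, vecMulVec_apply, Pi.star_apply, Pi.smul_apply, smul_eq_mul,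
        star_mul', Matrix.zero_apply]
      linear_combination (-(u i * star (u j))) * hc1
    have hsqrt : traceNorm A = (0 : Matrix (Fin d) (Fin d) ℂ).trace.re :=
      traceNorm_eq_of_sq A 0 PosSemidef.zero (by rw [hA0]; simp)
    rw [hsqrt, ← hse]
    simp
  · -- s > 0
    set t : ℝ := Real.sqrt s with ht
    have htp : 0 < t := Real.sqrt_pos.mpr hsp
    have ht2 : t * t = s := Real.mul_self_sqrt hs0
    set B : Matrix (Fin d) (Fin d) ℂ := (t : ℂ) • U + ((t⁻¹ : ℝ) : ℂ) • W with hB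
    have hBpsd : B.PosSemidef :=
      (psd_smul (vmv_psd u) htp.le).add (psd_smul (vmv_psd w₀) (inv_nonneg.2 htp.le))
    have htne : t ≠ 0 := htp.ne'
    have hB2 : B ^ 2 = Aᴴ * A := by
      rw [hAA, pow_two, hB, add_mul, mul_add, mul_add, Matrix.smul_mul, Matrix.smul_mul,
        Matrix.smul_mul, Matrix.smul_mul, Matrix.mul_smul, Matrix.mul_smul,
        Matrix.mul_smul, Matrix.mul_smul, hU, hW, vmv_mul, vmv_mul, vmv_mul, vmv_mul,
        hu, huw, hwu, hww]
      simp only [one_smul, zero_smul, smul_zero, add_zero, zero_add, smul_smul]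
      congr 1
      · congr 1
        rw [← Complex.ofReal_mul, ht2]
      · have hone : ((t⁻¹ : ℝ) : ℂ) * (((t⁻¹ : ℝ) : ℂ) * (s : ℂ)) = 1 := by
          have : t⁻¹ * (t⁻¹ * s) = 1 := by
            field_simp
            linarith [ht2]
          exact_mod_cast this
        rw [hone, one_smul]
    have hsqrt : traceNorm A = B.trace.re :=
      traceNorm_eq_of_sq A B hBpsd hB2
    rw [hsqrt, hB, trace_add, trace_smul, trace_smul, hU, hW, vmv_trace,
      vmv_trace, hu, hww]
    have h4 : ((t : ℂ) • (1 : ℂ) + ((t⁻¹ : ℝ) : ℂ) • (s : ℂ)) = ((t + t⁻¹ * s : ℝ) : ℂ) := by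
      push_cast
      simp [smul_eq_mul]
    rw [h4, Complex.ofReal_re]
    have h5 : t⁻¹ * s = t := by
      field_simp
      linarith [ht2]
    rw [h5, ht]
    ring

theorem traceNorm_embedded_pure_states_ge (d : ℕ) (e₀ φ φ' : Fin d → ℂ)
    (he₀ : star e₀ ⬝ᵥ e₀ = 1) (hφ : star φ ⬝ᵥ φ = 1) (hφ' : star φ' ⬝ᵥ φ' = 1)
    (horth : star e₀ ⬝ᵥ φ = 0) (horth' : star e₀ ⬝ᵥ φ' = 0)
    (l : ℝ) (hl0 : 0 < l) (hl1 : l ≤ 1)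
    (ψ ψ' : Fin d → ℂ)
    (hψ : ψ = fun i => (Real.sqrt (1 - l) : ℂ) * e₀ i + (Real.sqrt l : ℂ) * φ i)
    (hψ' : ψ' = fun i => (Real.sqrt (1 - l) : ℂ) * e₀ i + (Real.sqrt l : ℂ) * φ' i) :
    Real.sqrt (l / 2) *
        traceNorm (Matrix.vecMulVec φ (star φ) - Matrix.vecMulVec φ' (star φ')) ≤
      traceNorm (Matrix.vecMulVec ψ (star ψ) - Matrix.vecMulVec ψ' (star ψ')) := by
  have h1l : (0:ℝ) ≤ 1 - l := by linarith
  set a : ℂ := (Real.sqrt (1 - l) : ℂ) with ha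
  set b : ℂ := (Real.sqrt l : ℂ) with hb
  have hsa : star a = a := by rw [ha]; exact Complex.conj_ofReal _
  have hsb : star b = b := by rw [hb]; exact Complex.conj_ofReal _
  have ha2 : a * a = ((1 - l : ℝ) : ℂ) := by
    rw [ha, ← Complex.ofReal_mul, Real.mul_self_sqrt h1l]
  have hb2 : b * b = ((l : ℝ) : ℂ) := by
    rw [hb, ← Complex.ofReal_mul, Real.mul_self_sqrt hl0.le]
  have hψe : ψ = a • e₀ + b • φ := by rw [hψ]; rfl
  have hψ'e : ψ' = a • e₀ + b • φ' := by rw [hψ']; rfl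
  have hφe : star φ ⬝ᵥ e₀ = 0 := by rw [star_dot_comm, horth, star_zero]
  have hφ'e : star φ' ⬝ᵥ e₀ = 0 := by rw [star_dot_comm, horth', star_zero]
  set c : ℂ := star φ ⬝ᵥ φ' with hc
  have ha2' : a * a = 1 - (l : ℂ) := by rw [ha2]; push_cast; ring
  have hb2' : b * b = (l : ℂ) := hb2
  have hψψ : star ψ ⬝ᵥ ψ = 1 := by
    rw [hψe]
    simp only [star_add, star_smul, add_dotProduct, dotProduct_add, smul_dotProduct,
      dotProduct_smul, smul_eq_mul, hsa, hsb, he₀, horth, hφe, hφ]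
    linear_combination ha2' + hb2'
  have hψ'ψ' : star ψ' ⬝ᵥ ψ' = 1 := by
    rw [hψ'e]
    simp only [star_add, star_smul, add_dotProduct, dotProduct_add, smul_dotProduct,
      dotProduct_smul, smul_eq_mul, hsa, hsb, he₀, horth', hφ'e, hφ']
    linear_combination ha2' + hb2'
  have hψψ' : star ψ ⬝ᵥ ψ' = ((1 - l : ℝ) : ℂ) + ((l : ℝ) : ℂ) * c := by
    rw [hψe, hψ'e]
    simp only [star_add, star_smul, add_dotProduct, dotProduct_add, smul_dotProduct,
      dotProduct_smul, smul_eq_mul, hsa, hsb, he₀, horth', hφe, ← hc]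
    push_cast
    linear_combination ha2' + hb2' * c
  rw [traceNorm_pure_diff φ φ' hφ hφ', traceNorm_pure_diff ψ ψ' hψψ hψ'ψ', hψψ', ← hc]
  set r : ℝ := c.re with hr
  set i : ℝ := c.im with hi
  have hnc : Complex.normSq c = r ^ 2 + i ^ 2 := by
    rw [Complex.normSq_apply, ← hr, ← hi]
    ring
  have hncψ : Complex.normSq (((1 - l : ℝ) : ℂ) + ((l : ℝ) : ℂ) * c)
      = (1 - l + l * r) ^ 2 + (l * i) ^ 2 := by
    rw [Complex.normSq_apply]
    simp only [Complex.add_re, Complex.add_im, Complex.mul_re, Complex.mul_im,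
      Complex.ofReal_re, Complex.ofReal_im, ← hr, ← hi]
    ring
  rw [hnc, hncψ]
  by_cases hle : r ^ 2 + i ^ 2 ≤ 1
  · have key : l / 2 * (1 - (r ^ 2 + i ^ 2)) ≤ 1 - ((1 - l + l * r) ^ 2 + (l * i) ^ 2) := by
      have hr1 : r ≤ 1 := by nlinarith [sq_nonneg i, sq_nonneg (r - 1)]
      by_cases hhalf : l ≤ 1 / 2
      · nlinarith [mul_nonneg hl0.le (sub_nonneg.2 hr1),
          mul_nonneg (mul_nonneg hl0.le (by linarith : (0:ℝ) ≤ 1 / 2 - l)) (sq_nonneg (1 - r)),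
          mul_nonneg (mul_nonneg hl0.le (by linarith : (0:ℝ) ≤ 1 / 2 - l)) (sq_nonneg i)]
      · nlinarith [mul_nonneg (mul_nonneg hl0.le (by linarith : (0:ℝ) ≤ 1 - l))
            (sub_nonneg.2 hr1),
          mul_nonneg (mul_nonneg hl0.le (by linarith : (0:ℝ) ≤ l - 1 / 2))
            (sub_nonneg.2 hle)]
    calc Real.sqrt (l / 2) * (2 * Real.sqrt (1 - (r ^ 2 + i ^ 2)))
        = 2 * Real.sqrt (l / 2 * (1 - (r ^ 2 + i ^ 2))) := by
          rw [Real.sqrt_mul (by positivity)]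
          ring
      _ ≤ 2 * Real.sqrt (1 - ((1 - l + l * r) ^ 2 + (l * i) ^ 2)) := by
          have := Real.sqrt_le_sqrt key
          linarith
  · have hneg : 1 - (r ^ 2 + i ^ 2) ≤ 0 := by linarith
    rw [Real.sqrt_eq_zero_of_nonpos hneg]
    have : (0:ℝ) ≤ 2 * Real.sqrt (1 - ((1 - l + l * r) ^ 2 + (l * i) ^ 2)) := by positivity
    linarith
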